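/- For all real numbers θ and λ, Q(2λ·exp(iθ) + exp(−2iθ)) = −16·(1 − λ²)·(λ − cos 3θ)². Consequently, Q(2λ·exp(iθ) + exp(−2iθ)) ≤ 0 if and only if |λ| ≤ 1; that is, the needle {2λ·exp(iθ) + exp(−2iθ) : −1 ≤ λ ≤ 1} lies in the closed deltoid region, while the rest of the tangent line (|λ| > 1) lies strictly outside the deltoid. -/
import Mathlib


open Complex ComplexConjugate
open scoped ComplexOrder

/-- `Q z = z²·conj(z)² − 4(z³ + conj(z)³) + 18·z·conj(z) − 27`;
the standard deltoid is `{z : ℂ | Q z = 0}` and the closed deltoid region is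
`{z : ℂ | Q z ≤ 0}` (the order on `ℂ`: `u ≤ v ↔ u.re ≤ v.re ∧ u.im = v.im`). -/
noncomputable def Q (z : ℂ) : ℂ :=
  z ^ 2 * (conj z) ^ 2 - 4 * (z ^ 3 + (conj z) ^ 3) + 18 * z * conj z - 27

theorem needle_inside_deltoid (θ lam : ℝ) :
    Q (2 * lam * exp (I * θ) + exp (-2 * I * θ)) =
      ((-16 * (1 - lam ^ 2) * (lam - Real.cos (3 * θ)) ^ 2 : ℝ) : ℂ) ∧
    (Q (2 * lam * exp (I * θ) + exp (-2 * I * θ)) ≤ 0 ↔ |lam| ≤ 1) := by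
  set e : ℂ := exp (I * θ) with he_def
  have he : e ≠ 0 := Complex.exp_ne_zero _
  have hinv : e⁻¹ = exp (-(I * θ)) := by
    rw [← Complex.exp_neg]
  have h2 : exp (-2 * I * θ) = e⁻¹ ^ 2 := by
    rw [hinv, ← Complex.exp_nat_mul]
    norm_num
    ring_nf
  have hconj : conj e = e⁻¹ := by
    rw [hinv, he_def, ← Complex.exp_conj]
    congr 1
    simp [Complex.conj_ofReal]
  have hc3 : Complex.cos (3 * (θ : ℂ)) = (e ^ 3 + e⁻¹ ^ 3) / 2 := by
    rw [Complex.cos]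
    congr 2
    · rw [he_def, ← Complex.exp_nat_mul]
      congr 1
      push_cast
      ring
    · rw [hinv, ← Complex.exp_nat_mul]
      congr 1
      push_cast
      ring
  have key : Q (2 * lam * exp (I * θ) + exp (-2 * I * θ)) =
      ((-16 * (1 - lam ^ 2) * (lam - Real.cos (3 * θ)) ^ 2 : ℝ) : ℂ) := by
    rw [Q, h2]
    have hcz : conj (2 * (lam : ℂ) * e + e⁻¹ ^ 2) = 2 * (lam : ℂ) * e⁻¹ + e ^ 2 := by
      simp only [map_add, map_mul, map_pow, map_inv₀, hconj, Complex.conj_ofReal,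
        map_ofNat, inv_inv]
    push_cast
    rw [← he_def, hcz, hc3]
    field_simp
    ring
  refine ⟨key, ?_⟩
  rw [key]
  have h0 : (0 : ℂ) = ((0 : ℝ) : ℂ) := by norm_num
  rw [h0, Complex.real_le_real]
  have hc1 : |Real.cos (3 * θ)| ≤ 1 := Real.abs_cos_le_one _
  rw [abs_le] at hc1
  constructor
  · intro h
    by_contra hcon
    push_neg at hcon
    have hne : lam - Real.cos (3 * θ) ≠ 0 := by
      intro hE
      have hlc : lam = Real.cos (3 * θ) := by linarith
      rcases abs_cases lam with ⟨h1, _⟩ | ⟨h1, _⟩ <;> rw [h1] at hcon <;> linarith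
    have hd : 0 < (lam - Real.cos (3 * θ)) ^ 2 := by
      rw [← _root_.sq_abs]
      exact pow_pos (abs_pos.mpr hne) 2
    have hl2 : 1 < lam ^ 2 := by
      nlinarith [_root_.sq_abs lam, abs_nonneg lam]
    nlinarith [mul_pos (by linarith : (0:ℝ) < lam ^ 2 - 1) hd]
  · intro h
    rw [abs_le] at h
    nlinarith [sq_nonneg (lam - Real.cos (3 * θ)),
      mul_nonneg (by nlinarith : (0:ℝ) ≤ 1 - lam ^ 2) (sq_nonneg (lam - Real.cos (3 * θ)))]
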